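/- arXiv:math-ph/0611056 — 2 statements merged into one kernel-verified Lean document; each statement's English description precedes it below -/
import Mathlib

section
/- Define the 2 × 3 rectangle Gell-Mann system: Λ₀ = I_{2×3} = [[1,0,0],[0,1,0]], Λ₁ = [[0,1,0],[1,0,0]], Λ₂ = [[0,-i,0],[i,0,0]], Λ₃ = [[1,0,0],[0,-1,0]], Λ₄ = [[0,0,√2],[0,0,0]], Λ₅ = [[0,0,0],[0,0,√2]]. Then U_{2⊗3} = (1/2) I_{2×3}† ⊗ I_{2×3} + (1/2) Σ_{a=1}^{5} Λ_a† ⊗ Λ_a. -/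
open Matrix
open scoped Matrix Kronecker

set_option maxHeartbeats 2000000 in
theorem U23_eq_rectangle_gellmann_sum :
    let I23 : Matrix (Fin 2) (Fin 3) ℂ := !![1, 0, 0; 0, 1, 0]
    let Λ : Fin 5 → Matrix (Fin 2) (Fin 3) ℂ :=
      ![!![0, 1, 0; 1, 0, 0],
        !![0, -Complex.I, 0; Complex.I, 0, 0],
        !![1, 0, 0; 0, -1, 0],
        !![0, 0, (Real.sqrt 2 : ℂ); 0, 0, 0],
        !![0, 0, 0; 0, 0, (Real.sqrt 2 : ℂ)]]
    (∑ i : Fin 3, ∑ j : Fin 2,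
        (single i j (1 : ℂ)) ⊗ₖ (single j i (1 : ℂ)))
      = (1 / 2 : ℂ) • (I23ᴴ ⊗ₖ I23) + (1 / 2 : ℂ) • ∑ a : Fin 5, (Λ a)ᴴ ⊗ₖ Λ a := by
  intro I23 Λ
  have h2 : ((Real.sqrt 2 : ℝ) : ℂ) * ((Real.sqrt 2 : ℝ) : ℂ) = 2 := by
    norm_cast
    exact Real.mul_self_sqrt (by norm_num)
  ext ⟨i, j⟩ ⟨k, l⟩
  fin_cases i <;> fin_cases j <;> fin_cases k <;> fin_cases l <;>
    simp [Fin.sum_univ_succ, I23, Λ, Matrix.single, Complex.ext_iff, h2] <;>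
    ring_nf
end

section
/- For the 3 × 2 rectangle Gell-Mann matrices obtained by appending a zero row to the Pauli matrices — Λ₁ = [[0,1],[1,0],[0,0]], Λ₂ = [[0,-i],[i,0],[0,0]], Λ₃ = [[1,0],[0,-1],[0,0]], Λ₄ = [[0,0],[0,0],[√2,0]], Λ₅ = [[0,0],[0,0],[0,√2]] — and I_{3×2} = [[1,0],[0,1],[0,0]], one has U_{3⊗2} = (1/2) I_{3×2}† ⊗ I_{3×2} + (1/2) Σ_{a=1}^{5} Λ_a† ⊗ Λ_a. -/
set_option maxHeartbeats 1000000


open Matrix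
open scoped Matrix Kronecker

theorem U32_eq_rectangle_gellmann_sum :
    let I32 : Matrix (Fin 3) (Fin 2) ℂ := !![1, 0; 0, 1; 0, 0]
    let Λ : Fin 5 → Matrix (Fin 3) (Fin 2) ℂ :=
      ![!![0, 1; 1, 0; 0, 0],
        !![0, -Complex.I; Complex.I, 0; 0, 0],
        !![1, 0; 0, -1; 0, 0],
        !![0, 0; 0, 0; (Real.sqrt 2 : ℂ), 0],
        !![0, 0; 0, 0; 0, (Real.sqrt 2 : ℂ)]]
    (∑ i : Fin 2, ∑ j : Fin 3,
        (single i j (1 : ℂ)) ⊗ₖ (single j i (1 : ℂ)))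
      = (1 / 2 : ℂ) • (I32ᴴ ⊗ₖ I32) + (1 / 2 : ℂ) • ∑ a : Fin 5, (Λ a)ᴴ ⊗ₖ Λ a := by
  intro I32 Λ
  simp only [Fin.sum_univ_succ, Fin.sum_univ_zero, Matrix.cons_val_zero,
    Matrix.cons_val_one, Matrix.head_cons, I32, Λ, Fin.isValue, add_zero, Matrix.cons_val_succ]
  ext ⟨i, j⟩ ⟨k, l⟩
  fin_cases i <;> fin_cases j <;> fin_cases k <;> fin_cases l <;>
    simp only [Matrix.add_apply, Matrix.smul_apply, Matrix.kroneckerMap_apply,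
      Matrix.conjTranspose_apply, Matrix.single, Matrix.of_apply,
      Matrix.cons_val', Matrix.cons_val_zero, Matrix.cons_val_one, Matrix.head_cons,
      Matrix.empty_val', Matrix.cons_val_fin_one, Matrix.head_fin_const, smul_eq_mul,
      Fin.mk_zero, Fin.mk_one] <;>
    norm_num [Matrix.cons_val, Complex.ext_iff, Fin.ext_iff, ← Complex.ofReal_mul, Real.mul_self_sqrt]
end
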